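/- Let v be a valuation on a field K. Then s(K) ≥ s(Kv) and p(K) ≥ p(Kv), where Kv is the residue field. -/

import Mathlib

/-- `a` is a sum of `n` squares in `R`. -/
def IsSumSqN {R : Type*} [CommRing R] (n : ℕ) (a : R) : Prop :=
  ∃ x : Fin n → R, a = ∑ i, x i ^ 2

/-- `a` is a sum of squares in `R`. -/
def IsSOS {R : Type*} [CommRing R] (a : R) : Prop := ∃ n, IsSumSqN n a

/-- The level `s(R)`. -/
noncomputable def levelN (R : Type*) [CommRing R] : ℕ∞ :=
  sInf {n : ℕ∞ | ∃ m : ℕ, (m : ℕ∞) = n ∧ IsSumSqN m (-1 : R)}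

/-- The Pythagoras number `p(R)`. -/
noncomputable def pythNum (R : Type*) [CommRing R] : ℕ∞ :=
  sInf {n : ℕ∞ | ∃ m : ℕ, (m : ℕ∞) = n ∧ ∀ a : R, IsSOS a → IsSumSqN m a}

open Classical in
/-- The modified Pythagoras number `p'(R)`. -/
noncomputable def pythNum' (R : Type*) [CommRing R] : ℕ∞ :=
  if ¬ IsSOS (-1 : R) ∨ ringChar R = 2 then pythNum R else levelN R + 1

/-- Padding a sum of squares with zeros. -/
lemma isSumSqN_mono {R : Type*} [CommRing R] {n m : ℕ} (h : n ≤ m) {a : R}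
    (ha : IsSumSqN n a) : IsSumSqN m a := by
  classical
  obtain ⟨x, rfl⟩ := ha
  refine ⟨fun i => if h' : (i : ℕ) < n then x ⟨i, h'⟩ else 0, ?_⟩
  have hstep : ∀ i : Fin m, (if h' : (i : ℕ) < n then x ⟨i, h'⟩ else 0) ^ 2
      = (fun k : ℕ => if h' : k < n then x ⟨k, h'⟩ ^ 2 else 0) ↑i := by
    intro i
    by_cases h' : (i : ℕ) < n <;> simp [h']
  rw [Finset.sum_congr rfl (fun i _ => hstep i),
    Fin.sum_univ_eq_sum_range (fun k : ℕ => if h' : k < n then x ⟨k, h'⟩ ^ 2 else 0) m,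
    ← Finset.sum_subset (Finset.range_subset_range.2 h)
      (by intro i _ hi; rw [Finset.mem_range] at hi; simp [hi]),
    ← Fin.sum_univ_eq_sum_range]
  exact Finset.sum_congr rfl fun i _ => by simp [i.isLt]

/-- In a char-2 field a sum of squares is a square. -/
lemma sum_sq_char_two {F : Type*} [Field F] (h2 : (2 : F) = 0) :
    ∀ (n : ℕ) (c : Fin n → F), ∃ d : F, ∑ i, c i ^ 2 = d ^ 2 := by
  intro n
  induction n with
  | zero => exact fun c => ⟨0, by simp⟩
  | succ n ih =>
    intro c
    obtain ⟨d, hd⟩ := ih (c ∘ Fin.succ)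
    refine ⟨c 0 + d, ?_⟩
    rw [Fin.sum_univ_succ]
    have h : ∑ i : Fin n, c i.succ ^ 2 = d ^ 2 := hd
    rw [h]
    linear_combination (-(c 0 * d)) * h2

/-- If `-1` is a sum of `k` squares, every sum of squares is a sum of `k+1` squares. -/
lemma sos_of_neg_one {F : Type*} [Field F] {k : ℕ} (h : IsSumSqN k (-1 : F)) {a : F}
    (ha : IsSOS a) : IsSumSqN (k + 1) a := by
  obtain ⟨y, hy⟩ := h
  by_cases h2 : (2 : F) = 0
  · obtain ⟨n, c, rfl⟩ := ha
    obtain ⟨d, hd⟩ := sum_sq_char_two h2 n c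
    refine ⟨Fin.cons d 0, ?_⟩
    rw [Fin.sum_univ_succ, hd]
    simp
  · refine ⟨Fin.cons ((a + 1) / 2) (fun i => y i * ((a - 1) / 2)), ?_⟩
    rw [Fin.sum_univ_succ]
    simp only [Fin.cons_zero, Fin.cons_succ, mul_pow]
    rw [← Finset.sum_mul, ← hy]
    field_simp
    ring

/-- Key lemma: if an element of the valuation ring is a sum of `m` squares in `K`, then its
residue is a sum of `m` squares in the residue field, or `-1` is a sum of `m-1` squares there. -/
lemma residue_sum_sq {K : Type*} [Field K] {Γ₀ : Type*}
    [LinearOrderedCommGroupWithZero Γ₀] (v : Valuation K Γ₀) (m : ℕ)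
    (b : v.valuationSubring) (x : Fin m → K) (hx : (b : K) = ∑ i, x i ^ 2) :
    IsSumSqN m (IsLocalRing.residue _ b) ∨
      (1 ≤ m ∧ IsSumSqN (m - 1) (-1 : IsLocalRing.ResidueField v.valuationSubring)) := by
  by_cases hall : ∀ i, v (x i) ≤ 1
  · left
    refine ⟨fun i => IsLocalRing.residue _ (⟨x i, hall i⟩ : v.valuationSubring), ?_⟩
    have hb : b = ∑ i, (⟨x i, hall i⟩ : v.valuationSubring) ^ 2 := by
      apply Subtype.ext
      push_cast
      exact hx
    rw [hb, map_sum]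
    simp [map_pow]
  · right
    push_neg at hall
    obtain ⟨i₀, hi₀⟩ := hall
    rcases m with _ | n
    · exact i₀.elim0
    refine ⟨Nat.succ_le_succ (Nat.zero_le n), ?_⟩
    obtain ⟨j, -, hj⟩ := Finset.exists_max_image Finset.univ (fun i => v (x i))
      ⟨i₀, Finset.mem_univ _⟩
    have hj1 : 1 < v (x j) := lt_of_lt_of_le hi₀ (hj i₀ (Finset.mem_univ _))
    have hvxj : (0 : Γ₀) < v (x j) := lt_trans zero_lt_one hj1
    have hxj : x j ≠ 0 := by
      intro h
      rw [h, map_zero] at hj1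
      exact absurd hj1 (by simp)
    have hy : ∀ i, v (x i / x j) ≤ 1 := by
      intro i
      rw [map_div₀, div_le_one₀ hvxj]
      exact hj i (Finset.mem_univ _)
    have hclt : v ((b : K) / (x j) ^ 2) < 1 := by
      rw [map_div₀, map_pow, div_lt_iff₀ (pow_pos hvxj 2), one_mul]
      exact lt_of_le_of_lt b.2 (one_lt_pow₀ hj1 (by norm_num))
    set C : v.valuationSubring := ⟨(b : K) / (x j) ^ 2, le_of_lt hclt⟩ with hC
    set Y : Fin (n + 1) → v.valuationSubring := fun i => ⟨x i / x j, hy i⟩ with hYdef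
    have hCY : C = ∑ i, Y i ^ 2 := by
      apply Subtype.ext
      push_cast
      simp only [hC, hYdef, div_pow, ← Finset.sum_div, ← hx]
    have hC0 : IsLocalRing.residue _ C = 0 := by
      rw [IsLocalRing.residue_eq_zero_iff, IsLocalRing.mem_maximalIdeal, mem_nonunits_iff]
      intro hu
      obtain ⟨u, hu'⟩ := hu
      have h1 : (u.val : K) * (u⁻¹.val : K) = 1 := by
        rw [← Subring.coe_mul]
        norm_cast
        simp
      have h2 : v (u.val : K) * v ((u⁻¹).val : K) = 1 := by
        rw [← map_mul, h1, map_one]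
      have h3 : v (u.val : K) = 1 := by
        rcases lt_or_eq_of_le (u.val.2 : v (u.val : K) ≤ 1) with h | h
        · exfalso
          have : v (u.val : K) * v ((u⁻¹).val : K) < 1 :=
            lt_of_le_of_lt (mul_le_of_le_one_right' ((u⁻¹).val.2)) h
          rw [h2] at this
          exact lt_irrefl _ this
        · exact h
      rw [hu'] at h3
      rw [hC] at h3
      exact absurd h3 (ne_of_lt hclt)
    have hsum : (0 : IsLocalRing.ResidueField v.valuationSubring)
        = ∑ i, (IsLocalRing.residue _ (Y i)) ^ 2 := by
      rw [← hC0, hCY, map_sum]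
      simp [map_pow]
    have hYj : Y j = 1 := Subtype.ext (by simp [hYdef, div_self hxj])
    rw [Fin.sum_univ_succAbove _ j, hYj, map_one, one_pow] at hsum
    show IsSumSqN n _
    refine ⟨fun i => IsLocalRing.residue _ (Y (j.succAbove i)), ?_⟩
    linear_combination hsum

/-- For a valuation `v` on `K`: `s(K) ≥ s(Kv)` and `p(K) ≥ p(Kv)`. -/
theorem level_pyth_residue_le {K : Type*} [Field K] {Γ₀ : Type*}
    [LinearOrderedCommGroupWithZero Γ₀] (v : Valuation K Γ₀) :
    levelN (IsLocalRing.ResidueField v.valuationSubring) ≤ levelN K ∧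
      pythNum (IsLocalRing.ResidueField v.valuationSubring) ≤ pythNum K := by
  constructor
  · apply sInf_le_sInf
    rintro t ⟨m, rfl, hm⟩
    refine ⟨m, rfl, ?_⟩
    obtain ⟨x, hx⟩ := hm
    have hb : ((-1 : v.valuationSubring) : K) = ∑ i, x i ^ 2 := by push_cast; exact hx
    rcases residue_sum_sq v m (-1) x hb with h | ⟨h1, h2⟩
    · simpa using h
    · exact isSumSqN_mono (Nat.sub_le m 1) h2
  · apply sInf_le_sInf
    rintro t ⟨m, rfl, hm⟩
    refine ⟨m, rfl, ?_⟩
    intro a ha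
    obtain ⟨n, c, rfl⟩ := ha
    have hsurj := IsLocalRing.residue_surjective (R := v.valuationSubring)
    choose a' ha' using fun i => hsurj (c i)
    set b : v.valuationSubring := ∑ i, a' i ^ 2 with hbdef
    have hbK : (b : K) = ∑ i, ((a' i : K)) ^ 2 := by push_cast [hbdef]; rfl
    obtain ⟨x, hx⟩ := hm (b : K) ⟨n, fun i => (a' i : K), hbK⟩
    have hres : IsLocalRing.residue _ b = ∑ i, c i ^ 2 := by
      rw [hbdef, map_sum]
      simp [map_pow, ha']
    rcases residue_sum_sq v m b x hx with h | ⟨h1, h2⟩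
    · rwa [hres] at h
    · have := sos_of_neg_one h2 (⟨n, c, rfl⟩ : IsSOS (∑ i, c i ^ 2))
      rwa [Nat.sub_add_cancel h1] at this
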